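/- arXiv:2001.00108 — 3 statements merged into one kernel-verified Lean document; each statement's English description precedes it below -/
import Mathlib

section
/- Define I_R = ∫₀^{π} dφ / |cosh(πR e^{iφ})| for R > 0. Then I_R = O(1/R) as R → ∞ through positive integers; i.e., there is a constant C such that I_R ≤ C/R for all sufficiently large integers R. -/
open Real Complex

lemma abs_cosh_eq (x y : ℝ) :
    ‖Complex.cosh (x + y * Complex.I)‖ =
      Real.sqrt (Real.sinh x ^ 2 + Real.cos y ^ 2) := by
  have h : Complex.cosh (x + y * Complex.I)
      = (Real.cosh x * Real.cos y : ℝ) + (Real.sinh x * Real.sin y : ℝ) * Complex.I := by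
    rw [Complex.cosh_add, Complex.cosh_mul_I, Complex.sinh_mul_I]
    push_cast [Complex.ofReal_cosh, Complex.ofReal_sinh, ← Complex.ofReal_cos, ← Complex.ofReal_sin]
    ring
  rw [h, Complex.norm_def, Complex.normSq_apply]
  congr 1
  simp only [Complex.add_re, Complex.add_im, Complex.ofReal_re, Complex.ofReal_im,
    Complex.mul_I_re, Complex.mul_I_im]
  have hc := Real.cosh_sq x
  have hs := Real.sin_sq_add_cos_sq y
  ring_nf
  nlinarith [Real.sinh_sq x]

lemma integrand_eq (R : ℕ) (φ : ℝ) :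
    ‖Complex.cosh ((π : ℂ) * (R : ℂ) * Complex.exp (Complex.I * (φ : ℂ)))‖ =
      Real.sqrt (Real.sinh (π * R * Real.cos φ) ^ 2 + Real.cos (π * R * Real.sin φ) ^ 2) := by
  have h : (π : ℂ) * (R : ℂ) * Complex.exp (Complex.I * (φ : ℂ))
      = ((π * R * Real.cos φ : ℝ) : ℂ) + ((π * R * Real.sin φ : ℝ) : ℂ) * Complex.I := by
    rw [mul_comm Complex.I, Complex.exp_mul_I]
    push_cast [← Complex.ofReal_cos, ← Complex.ofReal_sin]
    ring
  rw [h, abs_cosh_eq]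


noncomputable def Faux (R : ℕ) (φ : ℝ) : ℝ :=
  1 / Real.sqrt (Real.sinh (π * R * Real.cos φ) ^ 2 + Real.cos (π * R * Real.sin φ) ^ 2)

lemma sqrt_ge_cos (s c : ℝ) : |Real.cos c| ≤ Real.sqrt (Real.sinh s ^ 2 + Real.cos c ^ 2) := by
  rw [← Real.sqrt_sq_eq_abs]
  exact Real.sqrt_le_sqrt (by nlinarith [sq_nonneg (Real.sinh s)])

lemma sqrt_ge_sinh (s c : ℝ) : Real.sinh |s| ≤ Real.sqrt (Real.sinh s ^ 2 + Real.cos c ^ 2) := by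
  rw [← Real.abs_sinh, ← Real.sqrt_sq_eq_abs]
  exact Real.sqrt_le_sqrt (by nlinarith [sq_nonneg (Real.cos c)])

lemma cube_le_sinh (x : ℝ) (hx : 1 ≤ x) : x ^ 3 / 108 ≤ Real.sinh x := by
  have h1 : (x / 3) ^ 3 ≤ Real.exp x := by
    have h2 : x / 3 + 1 ≤ Real.exp (x / 3) := Real.add_one_le_exp _
    have h3 : (x / 3) ^ 3 ≤ Real.exp (x / 3) ^ 3 := by
      apply pow_le_pow_left₀ (by linarith) (by linarith)
    calc (x / 3) ^ 3 ≤ Real.exp (x / 3) ^ 3 := h3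
      _ = Real.exp x := by rw [← Real.exp_nat_mul]; congr 1; push_cast; ring
  have h4 : (2 : ℝ) ≤ Real.exp x := by have := Real.add_one_le_exp x; linarith
  have h5 : Real.exp (-x) * Real.exp x = 1 := by rw [← Real.exp_add]; simp
  rw [Real.sinh_eq]
  nlinarith [Real.exp_pos x, Real.exp_pos (-x)]

set_option maxHeartbeats 1000000 in
lemma B_mid (R : ℕ) (hR : 1 ≤ R) (φ : ℝ)
    (h1 : π / 2 - 1 / (2 * R) ≤ φ) (h2 : φ ≤ π / 2 + 1 / (2 * R)) :
    Faux R φ ≤ 2 := by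
  have hRpos : (0 : ℝ) < R := by exact_mod_cast hR
  have hR1 : (1 : ℝ) ≤ R := by exact_mod_cast hR
  obtain ⟨t, ht⟩ : ∃ t : ℝ, φ - π / 2 = t := ⟨_, rfl⟩
  have h1' : -(1 / (2 * (R:ℝ))) ≤ t := by rw [← ht]; linarith
  have h2' : t ≤ 1 / (2 * (R:ℝ)) := by rw [← ht]; linarith
  have hsin : Real.sin φ = Real.cos t := by
    rw [show φ = t + π / 2 by rw [← ht]; ring, Real.sin_add_pi_div_two]
  obtain ⟨u, hu⟩ : ∃ u : ℝ, π * R * (1 - Real.cos t) = u := ⟨_, rfl⟩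
  have hu0 : 0 ≤ u := by
    have h := Real.cos_le_one t
    have hp := Real.pi_pos
    rw [← hu]
    have : 0 ≤ 1 - Real.cos t := by linarith
    positivity
  have huval : π * ↑R * Real.sin φ = ↑R * π - u := by rw [hsin, ← hu]; ring
  have hcos : Real.cos (π * ↑R * Real.sin φ) = (-1) ^ R * Real.cos u := by
    rw [huval, Real.cos_nat_mul_pi_sub]
  have htsq : t ^ 2 ≤ (1 / (2 * (R : ℝ))) ^ 2 := sq_le_sq' h1' h2'
  have hcos_t : 1 - t ^ 2 / 2 ≤ Real.cos t := Real.one_sub_sq_div_two_le_cos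
  have hu_le : u ≤ 1 / 2 := by
    have hpi4 : π ≤ 4 := by linarith [Real.pi_le_four]
    have h1c : 1 - Real.cos t ≤ t ^ 2 / 2 := by linarith
    have humid : u ≤ π * R * ((1 / (2 * (R : ℝ))) ^ 2 / 2) := by
      rw [← hu]
      have h9 : 1 - Real.cos t ≤ (1 / (2 * (R : ℝ))) ^ 2 / 2 := by linarith
      have hpR : 0 ≤ π * (R : ℝ) := by positivity
      nlinarith
    have heq : π * R * ((1 / (2 * (R : ℝ))) ^ 2 / 2) = π / (8 * R) := by field_simp; ring
    have h8 : π / (8 * (R : ℝ)) ≤ π / 8 := by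
      apply div_le_div_of_nonneg_left Real.pi_pos.le (by norm_num) (by linarith)
    linarith
  have hcosu : 1 / 2 ≤ Real.cos u := by
    have h := Real.one_sub_sq_div_two_le_cos (x := u)
    nlinarith [sq_nonneg u]
  have hcabs : 1 / 2 ≤ |Real.cos (π * ↑R * Real.sin φ)| := by
    rw [hcos, abs_mul, _root_.abs_pow, abs_neg, abs_one, one_pow, one_mul,
      _root_.abs_of_nonneg (show (0:ℝ) ≤ Real.cos u by linarith)]
    exact hcosu
  have hS : (1:ℝ)/2 ≤ Real.sqrt (Real.sinh (π * ↑R * Real.cos φ) ^ 2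
      + Real.cos (π * ↑R * Real.sin φ) ^ 2) :=
    by exact le_trans hcabs (sqrt_ge_cos _ _)
  have hSpos : 0 < Real.sqrt (Real.sinh (π * ↑R * Real.cos φ) ^ 2
      + Real.cos (π * ↑R * Real.sin φ) ^ 2) := by linarith
  simp only [Faux]
  rw [div_le_iff₀ hSpos]
  linarith

set_option maxHeartbeats 1000000 in
lemma B_right (R : ℕ) (hR : 1 ≤ R) (φ : ℝ)
    (h1 : π / 2 + 1 / (2 * R) ≤ φ) (h2 : φ ≤ π) :
    Faux R φ ≤ 27 / (2 * R ^ 3) * (φ - π / 2) ^ (-3 : ℤ) := by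
  have hRpos : (0 : ℝ) < R := by exact_mod_cast hR
  have hR1 : (1 : ℝ) ≤ R := by exact_mod_cast hR
  obtain ⟨t, ht⟩ : ∃ t : ℝ, φ - π / 2 = t := ⟨_, rfl⟩
  have ht1 : 1 / (2 * (R:ℝ)) ≤ t := by rw [← ht]; linarith
  have ht2 : t ≤ π / 2 := by rw [← ht]; linarith
  have htpos : 0 < t := lt_of_lt_of_le (by positivity) ht1
  have hcosφ : Real.cos φ = -Real.sin t := by
    rw [show φ = t + π / 2 by rw [← ht]; ring, Real.cos_add_pi_div_two]
  have hsint : 2 / π * t ≤ Real.sin t := Real.mul_le_sin (by linarith) ht2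
  have hsint0 : 0 ≤ Real.sin t := le_trans (by positivity) hsint
  have hkey : 2 * (R:ℝ) * t ≤ π * R * Real.sin t := by
    have hpR : (0:ℝ) ≤ π * R := by positivity
    have h3 : π * R * (2 / π * t) ≤ π * R * Real.sin t :=
      mul_le_mul_of_nonneg_left hsint hpR
    have h4 : π * (R:ℝ) * (2 / π * t) = 2 * R * t := by
      field_simp
    linarith
  have h2Rt : 1 ≤ 2 * (R:ℝ) * t := by
    have : 2 * (R:ℝ) * (1 / (2 * R)) = 1 := by field_simp
    nlinarith
  have habs : |π * ↑R * Real.cos φ| = π * ↑R * Real.sin t := by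
    rw [hcosφ, show π * (R:ℝ) * -Real.sin t = -(π * R * Real.sin t) by ring,
      abs_neg, _root_.abs_of_nonneg (by positivity)]
  have hchain : 2 * (R:ℝ) ^ 3 * t ^ 3 / 27 ≤
      Real.sqrt (Real.sinh (π * ↑R * Real.cos φ) ^ 2
        + Real.cos (π * ↑R * Real.sin φ) ^ 2) := by
    have s1 := sqrt_ge_sinh (π * ↑R * Real.cos φ) (π * ↑R * Real.sin φ)
    rw [habs] at s1
    have s2 : Real.sinh (2 * (R:ℝ) * t) ≤ Real.sinh (π * ↑R * Real.sin t) :=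
      Real.sinh_le_sinh.mpr hkey
    have s3 := cube_le_sinh (2 * (R:ℝ) * t) h2Rt
    have s4 : (2 * (R:ℝ) * t) ^ 3 / 108 = 2 * (R:ℝ) ^ 3 * t ^ 3 / 27 := by ring
    linarith
  have hSpos : 0 < Real.sqrt (Real.sinh (π * ↑R * Real.cos φ) ^ 2
      + Real.cos (π * ↑R * Real.sin φ) ^ 2) := by
    have : (0:ℝ) < 2 * (R:ℝ) ^ 3 * t ^ 3 / 27 := by positivity
    linarith
  have step : Faux R φ ≤ 1 / (2 * (R:ℝ) ^ 3 * t ^ 3 / 27) := by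
    simp only [Faux]
    exact one_div_le_one_div_of_le (by positivity) hchain
  have heq : 1 / (2 * (R:ℝ) ^ 3 * t ^ 3 / 27) = 27 / (2 * R ^ 3) * t ^ (-3 : ℤ) := by
    rw [show (t:ℝ) ^ (-3 : ℤ) = (t ^ (3:ℕ))⁻¹ by
      rw [zpow_neg, ← zpow_natCast t 3]; norm_num]
    field_simp
  rw [ht]
  rw [← heq]
  exact step

set_option maxHeartbeats 1000000 in
lemma B_left (R : ℕ) (hR : 1 ≤ R) (φ : ℝ)
    (h1 : 0 ≤ φ) (h2 : φ ≤ π / 2 - 1 / (2 * R)) :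
    Faux R φ ≤ 27 / (2 * R ^ 3) * (π / 2 - φ) ^ (-3 : ℤ) := by
  have hRpos : (0 : ℝ) < R := by exact_mod_cast hR
  have hR1 : (1 : ℝ) ≤ R := by exact_mod_cast hR
  obtain ⟨t, ht⟩ : ∃ t : ℝ, π / 2 - φ = t := ⟨_, rfl⟩
  have ht1 : 1 / (2 * (R:ℝ)) ≤ t := by rw [← ht]; linarith
  have ht2 : t ≤ π / 2 := by rw [← ht]; linarith
  have htpos : 0 < t := lt_of_lt_of_le (by positivity) ht1
  have hcosφ : Real.cos φ = Real.sin t := by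
    rw [show φ = π / 2 - t by rw [← ht]; ring, Real.cos_pi_div_two_sub]
  have hsint : 2 / π * t ≤ Real.sin t := Real.mul_le_sin (by linarith) ht2
  have hsint0 : 0 ≤ Real.sin t := le_trans (by positivity) hsint
  have hkey : 2 * (R:ℝ) * t ≤ π * R * Real.sin t := by
    have hpR : (0:ℝ) ≤ π * R := by positivity
    have h3 : π * R * (2 / π * t) ≤ π * R * Real.sin t :=
      mul_le_mul_of_nonneg_left hsint hpR
    have h4 : π * (R:ℝ) * (2 / π * t) = 2 * R * t := by
      field_simp
    linarith
  have h2Rt : 1 ≤ 2 * (R:ℝ) * t := by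
    have : 2 * (R:ℝ) * (1 / (2 * R)) = 1 := by field_simp
    nlinarith
  have habs : |π * ↑R * Real.cos φ| = π * ↑R * Real.sin t := by
    rw [hcosφ, _root_.abs_of_nonneg (by positivity)]
  have hchain : 2 * (R:ℝ) ^ 3 * t ^ 3 / 27 ≤
      Real.sqrt (Real.sinh (π * ↑R * Real.cos φ) ^ 2
        + Real.cos (π * ↑R * Real.sin φ) ^ 2) := by
    have s1 := sqrt_ge_sinh (π * ↑R * Real.cos φ) (π * ↑R * Real.sin φ)
    rw [habs] at s1
    have s2 : Real.sinh (2 * (R:ℝ) * t) ≤ Real.sinh (π * ↑R * Real.sin t) :=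
      Real.sinh_le_sinh.mpr hkey
    have s3 := cube_le_sinh (2 * (R:ℝ) * t) h2Rt
    have s4 : (2 * (R:ℝ) * t) ^ 3 / 108 = 2 * (R:ℝ) ^ 3 * t ^ 3 / 27 := by ring
    linarith
  have hSpos : 0 < Real.sqrt (Real.sinh (π * ↑R * Real.cos φ) ^ 2
      + Real.cos (π * ↑R * Real.sin φ) ^ 2) := by
    have : (0:ℝ) < 2 * (R:ℝ) ^ 3 * t ^ 3 / 27 := by positivity
    linarith
  have step : Faux R φ ≤ 1 / (2 * (R:ℝ) ^ 3 * t ^ 3 / 27) := by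
    simp only [Faux]
    exact one_div_le_one_div_of_le (by positivity) hchain
  have heq : 1 / (2 * (R:ℝ) ^ 3 * t ^ 3 / 27) = 27 / (2 * R ^ 3) * t ^ (-3 : ℤ) := by
    rw [show (t:ℝ) ^ (-3 : ℤ) = (t ^ (3:ℕ))⁻¹ by
      rw [zpow_neg, ← zpow_natCast t 3]; norm_num]
    field_simp
  rw [ht, ← heq]
  exact step

set_option maxHeartbeats 1000000 in
lemma main_bound (R : ℕ) (hR : 1 ≤ R) :
    (∫ φ in (0:ℝ)..π, Faux R φ) ≤ 100 / R := by
  have hRpos : (0 : ℝ) < R := by exact_mod_cast hR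
  have hR1 : (1 : ℝ) ≤ R := by exact_mod_cast hR
  obtain ⟨a, ha⟩ : ∃ a : ℝ, 1 / (2 * (R:ℝ)) = a := ⟨_, rfl⟩
  have hapos : 0 < a := by rw [← ha]; positivity
  have hahalf : a ≤ 1 / 2 := by
    rw [← ha]
    apply one_div_le_one_div_of_le (by norm_num) (by linarith)
  have hpi := Real.pi_gt_three
  have h0ma : (0:ℝ) ≤ π / 2 - a := by linarith
  have hmapi : π / 2 + a ≤ π := by linarith
  by_cases hint : IntervalIntegrable (fun φ => Faux R φ) MeasureTheory.volume 0 π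
  swap
  · rw [intervalIntegral.integral_undef hint]; positivity
  have hmem : ∀ x : ℝ, 0 ≤ x → x ≤ π → x ∈ Set.uIcc (0:ℝ) π := fun x hx1 hx2 => by
    rw [Set.uIcc_of_le Real.pi_pos.le]; exact ⟨hx1, hx2⟩
  have hi1 : IntervalIntegrable (fun φ => Faux R φ) MeasureTheory.volume 0 (π/2 - a) :=
    hint.mono_set (Set.uIcc_subset_uIcc (hmem 0 le_rfl Real.pi_pos.le) (hmem _ h0ma (by linarith)))
  have hi2 : IntervalIntegrable (fun φ => Faux R φ) MeasureTheory.volume (π/2 - a) (π/2 + a) :=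
    hint.mono_set (Set.uIcc_subset_uIcc (hmem _ h0ma (by linarith)) (hmem _ (by linarith) hmapi))
  have hi3 : IntervalIntegrable (fun φ => Faux R φ) MeasureTheory.volume (π/2 + a) π :=
    hint.mono_set (Set.uIcc_subset_uIcc (hmem _ (by linarith) hmapi) (hmem π Real.pi_pos.le le_rfl))
  have hi23 : IntervalIntegrable (fun φ => Faux R φ) MeasureTheory.volume (π/2 - a) π :=
    hint.mono_set (Set.uIcc_subset_uIcc (hmem _ h0ma (by linarith)) (hmem π Real.pi_pos.le le_rfl))
  have e1 := intervalIntegral.integral_add_adjacent_intervals hi1 hi23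
  have e2 := intervalIntegral.integral_add_adjacent_intervals hi2 hi3
  -- middle piece
  have hmid : (∫ φ in (π/2 - a)..(π/2 + a), Faux R φ) ≤ 2 / R := by
    have hb : (∫ _ in (π/2 - a)..(π/2 + a), (2:ℝ)) = 2 / R := by
      rw [intervalIntegral.integral_const, smul_eq_mul]
      rw [show π / 2 + a - (π / 2 - a) = 2 * a by ring, ← ha]
      field_simp
    calc (∫ φ in (π/2 - a)..(π/2 + a), Faux R φ)
        ≤ ∫ _ in (π/2 - a)..(π/2 + a), (2:ℝ) := by
          apply intervalIntegral.integral_mono_on (by linarith) hi2 intervalIntegrable_const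
          intro x hx
          exact B_mid R hR x (by rw [ha]; linarith [hx.1]) (by rw [ha]; linarith [hx.2])
      _ = 2 / R := hb
  -- the common inner integral bound
  have hinner : (∫ x in a..(π/2), (x:ℝ) ^ (-3:ℤ)) ≤ 2 * R ^ 2 := by
    rw [integral_zpow (Or.inr ⟨by norm_num, Set.notMem_uIcc_of_lt hapos (by linarith)⟩)]
    have ha2 : (a:ℝ) ^ ((-3:ℤ) + 1) = 4 * (R:ℝ) ^ 2 := by
      rw [show ((-3:ℤ) + 1) = -((2:ℕ):ℤ) by norm_num, zpow_neg, zpow_natCast, ← ha]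
      rw [div_pow, one_pow, inv_div]
      ring
    have hpos2 : (0:ℝ) ≤ (π/2) ^ ((-3:ℤ) + 1) := by
      rw [show ((-3:ℤ) + 1) = -2 by norm_num, zpow_neg]
      positivity
    rw [ha2]
    rw [show (((-3:ℤ):ℝ) + 1) = -2 by norm_num]
    nlinarith
  -- right piece
  have hgint : IntervalIntegrable (fun φ => 27 / (2 * (R:ℝ) ^ 3) * (φ - π/2) ^ (-3:ℤ))
      MeasureTheory.volume (π/2 + a) π := by
    apply ContinuousOn.intervalIntegrable
    apply ContinuousOn.mul continuousOn_const
    apply ContinuousOn.zpow₀ (continuousOn_id.sub continuousOn_const)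
    intro x hx
    left
    rw [Set.uIcc_of_le (by linarith)] at hx
    have : π/2 + a ≤ x := hx.1
    intro hc
    have : x - π/2 = 0 := hc
    linarith
  have hright : (∫ φ in (π/2 + a)..π, Faux R φ) ≤ 27 / R := by
    have hmono : (∫ φ in (π/2 + a)..π, Faux R φ)
        ≤ ∫ φ in (π/2 + a)..π, 27 / (2 * (R:ℝ) ^ 3) * (φ - π/2) ^ (-3:ℤ) := by
      apply intervalIntegral.integral_mono_on (by linarith) hi3 hgint
      intro x hx
      exact B_right R hR x (by rw [ha]; linarith [hx.1]) hx.2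
    have hval : (∫ φ in (π/2 + a)..π, 27 / (2 * (R:ℝ) ^ 3) * (φ - π/2) ^ (-3:ℤ)) ≤ 27 / (R:ℝ) := by
      rw [intervalIntegral.integral_const_mul]
      have hcomp : (∫ φ in (π/2 + a)..π, (φ - π/2) ^ (-3:ℤ))
          = ∫ x in a..(π/2), (x:ℝ) ^ (-3:ℤ) := by
        rw [intervalIntegral.integral_comp_sub_right (fun x => x ^ (-3:ℤ)) (π/2)]
        rw [show π/2 + a - π/2 = a by ring, show π - π/2 = π/2 by ring]
      rw [hcomp]
      have hc : (0:ℝ) < 27 / (2 * (R:ℝ) ^ 3) := by positivity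
      calc 27 / (2 * (R:ℝ) ^ 3) * ∫ x in a..(π/2), (x:ℝ) ^ (-3:ℤ)
          ≤ 27 / (2 * (R:ℝ) ^ 3) * (2 * (R:ℝ) ^ 2) := by
            apply mul_le_mul_of_nonneg_left hinner hc.le
        _ = 27 / (R:ℝ) := by field_simp
    linarith
  -- left piece
  have hgintL : IntervalIntegrable (fun φ => 27 / (2 * (R:ℝ) ^ 3) * (π/2 - φ) ^ (-3:ℤ))
      MeasureTheory.volume 0 (π/2 - a) := by
    apply ContinuousOn.intervalIntegrable
    apply ContinuousOn.mul continuousOn_const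
    apply ContinuousOn.zpow₀ (continuousOn_const.sub continuousOn_id)
    intro x hx
    left
    rw [Set.uIcc_of_le (by linarith)] at hx
    have : x ≤ π/2 - a := hx.2
    intro hc
    have : π/2 - x = 0 := hc
    linarith
  have hleft : (∫ φ in (0:ℝ)..(π/2 - a), Faux R φ) ≤ 27 / R := by
    have hmono : (∫ φ in (0:ℝ)..(π/2 - a), Faux R φ)
        ≤ ∫ φ in (0:ℝ)..(π/2 - a), 27 / (2 * (R:ℝ) ^ 3) * (π/2 - φ) ^ (-3:ℤ) := by
      apply intervalIntegral.integral_mono_on h0ma hi1 hgintL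
      intro x hx
      exact B_left R hR x hx.1 (by rw [ha]; linarith [hx.2])
    have hval : (∫ φ in (0:ℝ)..(π/2 - a), 27 / (2 * (R:ℝ) ^ 3) * (π/2 - φ) ^ (-3:ℤ)) ≤ 27 / (R:ℝ) := by
      rw [intervalIntegral.integral_const_mul]
      have hcomp : (∫ φ in (0:ℝ)..(π/2 - a), (π/2 - φ) ^ (-3:ℤ))
          = ∫ x in a..(π/2), (x:ℝ) ^ (-3:ℤ) := by
        rw [intervalIntegral.integral_comp_sub_left (fun x => x ^ (-3:ℤ)) (π/2)]
        rw [show π/2 - (π/2 - a) = a by ring, show π/2 - 0 = π/2 by ring]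
      rw [hcomp]
      have hc : (0:ℝ) < 27 / (2 * (R:ℝ) ^ 3) := by positivity
      calc 27 / (2 * (R:ℝ) ^ 3) * ∫ x in a..(π/2), (x:ℝ) ^ (-3:ℤ)
          ≤ 27 / (2 * (R:ℝ) ^ 3) * (2 * (R:ℝ) ^ 2) := by
            apply mul_le_mul_of_nonneg_left hinner hc.le
        _ = 27 / (R:ℝ) := by field_simp
    linarith
  have htotal : (∫ φ in (0:ℝ)..π, Faux R φ) ≤ 56 / R := by
    rw [← e1, ← e2]
    have : (27:ℝ)/R + (2/R + 27/R) = 56/R := by ring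
    linarith
  have : (56:ℝ) / R ≤ 100 / R := (div_le_div_iff_of_pos_right hRpos).mpr (by norm_num)
  linarith

theorem I_R_isBigO_inv :
    ∃ C : ℝ, ∃ R₀ : ℕ, ∀ R : ℕ, R₀ ≤ R →
      (∫ φ in (0:ℝ)..π,
        1 / ‖Complex.cosh (π * R * Complex.exp (Complex.I * φ))‖) ≤ C / R := by
  refine ⟨100, 1, fun R hR => ?_⟩
  have heq : (∫ φ in (0:ℝ)..π,
      1 / ‖Complex.cosh (π * R * Complex.exp (Complex.I * φ))‖)
      = ∫ φ in (0:ℝ)..π, Faux R φ := by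
    apply intervalIntegral.integral_congr
    intro x _
    simp only [Faux, integrand_eq]
  rw [heq]
  exact main_bound R hR
end

section
/- For each integer n ≥ 2 and each complex ω with Re ω > -1/2, the residue at z = i(n - 1/2) of the function z ↦ ζ(1/2 - iz)/((1/2 - iz + ω)·cosh(πz)) equals (-1)^{n+1} ζ(n)/(πi (n + ω)). -/
open Real Complex Filter

/-- `f` has residue `r` at `c`: the circle integral of `f` around small circles
centred at `c` equals `2πi·r`. -/
def HasResidueAt (f : ℂ → ℂ) (c r : ℂ) : Prop :=
  ∀ᶠ ε in nhdsWithin 0 (Set.Ioi (0:ℝ)), (∮ z in C(c, ε), f z) = 2 * π * Complex.I * r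

theorem residue_at_upper_poles (n : ℕ) (hn : 2 ≤ n) (ω : ℂ) (hω : -(1/2) < ω.re) :
    HasResidueAt
      (fun z : ℂ => riemannZeta (1/2 - Complex.I * z) /
        ((1/2 - Complex.I * z + ω) * Complex.cosh (π * z)))
      (Complex.I * ((n : ℂ) - 1/2))
      ((-1 : ℂ) ^ (n + 1) * riemannZeta n / (π * Complex.I * ((n : ℂ) + ω))) := by
  set c : ℂ := Complex.I * ((n : ℂ) - 1/2) with hc
  have hπ : (π : ℂ) ≠ 0 := Complex.ofReal_ne_zero.mpr Real.pi_ne_zero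
  have hn2 : (2 : ℝ) ≤ (n : ℝ) := by exact_mod_cast hn
  have key : (π : ℂ) * c = ((π * ((n : ℝ) - 1/2) : ℝ) : ℂ) * Complex.I := by
    rw [hc]; push_cast; ring
  have harg : π * ((n : ℝ) - 1/2) = (n : ℝ) * π - π / 2 := by ring
  have hcosh0 : Complex.cosh ((π : ℂ) * c) = 0 := by
    rw [key, Complex.cosh_mul_I, ← Complex.ofReal_cos, harg,
      Real.cos_nat_mul_pi_sub, Real.cos_pi_div_two]
    simp
  have hsinh : Complex.sinh ((π : ℂ) * c) = (-1 : ℂ) ^ (n + 1) * Complex.I := by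
    rw [key, Complex.sinh_mul_I, ← Complex.ofReal_sin, harg,
      Real.sin_nat_mul_pi_sub, Real.sin_pi_div_two]
    push_cast
    ring
  have hIc : Complex.I * c = -((n : ℂ) - 1/2) := by
    rw [hc, ← mul_assoc, Complex.I_mul_I, neg_one_mul]
  have hcn : (1/2 : ℂ) - Complex.I * c = (n : ℂ) := by rw [hIc]; ring
  set g : ℂ → ℂ := fun z => riemannZeta (1/2 - Complex.I * z) / (1/2 - Complex.I * z + ω)
    with hg_def
  set K : ℂ → ℂ := dslope (fun z => Complex.cosh ((π : ℂ) * z)) c with hK_def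
  set h : ℂ → ℂ := fun z => g z / K z with hh_def
  -- real-part estimate on the ball of radius 1/2
  have hre : ∀ z ∈ Metric.ball c (1/2 : ℝ),
      ((1/2 : ℂ) - Complex.I * z).re > (n : ℝ) - 1/2 := by
    intro z hz
    have him : |(z - c).im| < 1/2 := by
      have hd := Metric.mem_ball.mp hz
      rw [Complex.dist_eq] at hd
      exact lt_of_le_of_lt (Complex.abs_im_le_norm _) hd
    have h1 : (1/2 : ℂ) - Complex.I * z = (n : ℂ) - Complex.I * (z - c) := by
      rw [mul_sub, hIc]; ring
    rw [h1]
    have h2 : ((n : ℂ) - Complex.I * (z - c)).re = (n : ℝ) + (z - c).im := by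
      simp [Complex.sub_re, Complex.mul_re]
      ring
    rw [h2]
    have := abs_lt.mp him
    linarith [this.1]
  have hz1 : ∀ z ∈ Metric.ball c (1/2 : ℝ), (1/2 : ℂ) - Complex.I * z ≠ 1 := by
    intro z hz heq
    have := hre z hz
    rw [heq] at this
    simp only [Complex.one_re] at this
    linarith
  have hz2 : ∀ z ∈ Metric.ball c (1/2 : ℝ), (1/2 : ℂ) - Complex.I * z + ω ≠ 0 := by
    intro z hz heq
    have h1 := hre z hz
    have h2 : ((1/2 : ℂ) - Complex.I * z + ω).re = ((1/2 : ℂ) - Complex.I * z).re + ω.re :=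
      Complex.add_re _ _
    rw [heq] at h2
    simp only [Complex.zero_re] at h2
    linarith
  -- cosh nonvanishing away from the pole
  have hcosh_ne : ∀ z ∈ Metric.ball c (1/2 : ℝ), z ≠ c →
      Complex.cosh ((π : ℂ) * z) ≠ 0 := by
    intro z hz hzc heq
    rw [← Complex.cos_mul_I] at heq
    obtain ⟨k, hk⟩ := Complex.cos_eq_zero_iff.mp heq
    have h3 : z * Complex.I = (2 * (k : ℂ) + 1) / 2 :=
      mul_left_cancel₀ hπ (by rw [← mul_assoc, hk]; ring)
    have hII : Complex.I * -Complex.I = 1 := by rw [mul_neg, Complex.I_mul_I]; ring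
    have hz4 : z = (2 * (k : ℂ) + 1) / 2 * -Complex.I := by
      calc z = z * (Complex.I * -Complex.I) := by rw [hII, mul_one]
        _ = z * Complex.I * -Complex.I := by ring
        _ = _ := by rw [h3]
    have hzc2 : z - c = -((k : ℂ) + n) * Complex.I := by
      rw [hz4, hc]; ring
    have hk0 : (k + (n : ℤ)) ≠ 0 := by
      intro h0
      apply hzc
      apply sub_eq_zero.mp
      have h4 : ((k : ℂ) + n) = 0 := by exact_mod_cast h0
      rw [hzc2, h4]
      ring
    have habs : (1 : ℝ) ≤ ‖z - c‖ := by
      rw [hzc2]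
      rw [norm_mul, Complex.norm_I, mul_one, norm_neg]
      have : ((k : ℂ) + n) = ((k + (n : ℤ) : ℤ) : ℂ) := by push_cast; ring
      rw [this, Complex.norm_intCast]
      exact_mod_cast Int.one_le_abs hk0
    have hd := Metric.mem_ball.mp hz
    rw [Complex.dist_eq] at hd
    linarith
  -- differentiability of K and its value at c
  have hch : Differentiable ℂ (fun z : ℂ => Complex.cosh ((π : ℂ) * z)) :=
    Complex.differentiable_cosh.comp (differentiable_id.const_mul _)
  have hKdiff : DifferentiableOn ℂ K (Metric.ball c (1/2 : ℝ)) :=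
    (Complex.differentiableOn_dslope (Metric.ball_mem_nhds c one_half_pos)).mpr
      hch.differentiableOn
  have hKc : K c = Complex.sinh ((π : ℂ) * c) * π := by
    have hd : HasDerivAt (fun z : ℂ => Complex.cosh ((π : ℂ) * z))
        (Complex.sinh ((π : ℂ) * c) * π) c := by
      have := (Complex.hasDerivAt_cosh ((π : ℂ) * c)).comp c
        ((hasDerivAt_id c).const_mul (π : ℂ))
      exact this.congr_deriv (by ring)
    rw [hK_def, dslope_same]
    exact hd.deriv
  have hKc2 : K c = (-1 : ℂ) ^ (n + 1) * Complex.I * π := by rw [hKc, hsinh]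
  have hKslope : ∀ z : ℂ, z ≠ c → K z = Complex.cosh ((π : ℂ) * z) / (z - c) := by
    intro z hzc
    rw [hK_def, dslope_of_ne _ hzc, slope_def_field, hcosh0, sub_zero]
  have hKne : ∀ z ∈ Metric.ball c (1/2 : ℝ), K z ≠ 0 := by
    intro z hz
    rcases eq_or_ne z c with rfl | hzc
    · rw [hKc2]
      exact mul_ne_zero (mul_ne_zero (pow_ne_zero _ (by norm_num)) Complex.I_ne_zero) hπ
    · rw [hKslope z hzc]
      exact div_ne_zero (hcosh_ne z hz hzc) (sub_ne_zero.mpr hzc)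
  -- differentiability of g and h
  have hgd : DifferentiableOn ℂ g (Metric.ball c (1/2 : ℝ)) := by
    intro z hz
    apply DifferentiableAt.differentiableWithinAt
    apply DifferentiableAt.div
    · exact (differentiableAt_riemannZeta (hz1 z hz)).comp z
        ((differentiableAt_const _).sub ((differentiableAt_id).const_mul _))
    · exact ((differentiableAt_const _).sub
        ((differentiableAt_id).const_mul _)).add (differentiableAt_const _)
    · exact hz2 z hz
  have hhd : DifferentiableOn ℂ h (Metric.ball c (1/2 : ℝ)) := hgd.div hKdiff hKne
  -- value of h at c
  have hnω : (n : ℂ) + ω ≠ 0 := by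
    intro h0
    have : ((n : ℂ) + ω).re = 0 := by rw [h0]; simp
    rw [Complex.add_re, Complex.natCast_re] at this
    linarith
  have hneg : ((-1 : ℂ)) ^ (n + 1) ≠ 0 := pow_ne_zero _ (by norm_num)
  have hsq : ((-1 : ℂ)) ^ (n + 1) * ((-1 : ℂ)) ^ (n + 1) = 1 := by
    rw [← pow_add, ← two_mul, pow_mul]; norm_num
  have hval : h c = (-1 : ℂ) ^ (n + 1) * riemannZeta n / ((π : ℂ) * Complex.I * ((n : ℂ) + ω)) := by
    rw [hh_def]
    simp only
    rw [hg_def]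
    simp only
    rw [hcn, hKc2]
    rw [div_div, div_eq_div_iff (by
      exact mul_ne_zero hnω (mul_ne_zero (mul_ne_zero hneg Complex.I_ne_zero) hπ))
      (mul_ne_zero (mul_ne_zero hπ Complex.I_ne_zero) hnω)]
    calc riemannZeta n * ((π : ℂ) * Complex.I * ((n : ℂ) + ω))
        = ((-1 : ℂ) ^ (n + 1) * (-1 : ℂ) ^ (n + 1)) * riemannZeta n *
          ((π : ℂ) * Complex.I * ((n : ℂ) + ω)) := by rw [hsq, one_mul]
      _ = _ := by ring
  -- the main computation
  filter_upwards [Ioo_mem_nhdsGT_of_mem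
    (Set.mem_Ico.mpr ⟨le_refl (0 : ℝ), one_half_pos⟩)] with ε hε
  obtain ⟨hε0, hε2⟩ := hε
  have hsub : Metric.closedBall c ε ⊆ Metric.ball c (1/2 : ℝ) :=
    Metric.closedBall_subset_ball hε2
  have hDC : DiffContOnCl ℂ h (Metric.ball c ε) :=
    ⟨hhd.mono (Metric.ball_subset_ball hε2.le),
     hhd.continuousOn.mono (Metric.closure_ball_subset_closedBall.trans hsub)⟩
  have hint := hDC.circleIntegral_sub_inv_smul (Metric.mem_ball_self hε0)
  have heq : Set.EqOn
      (fun z : ℂ => riemannZeta (1/2 - Complex.I * z) /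
        ((1/2 - Complex.I * z + ω) * Complex.cosh ((π : ℝ) * z)))
      (fun z : ℂ => (z - c)⁻¹ • h z) (Metric.sphere c ε) := by
    intro z hz
    rw [Metric.mem_sphere] at hz
    have hzc : z ≠ c := by
      intro h0
      rw [h0, dist_self] at hz
      exact hε0.ne hz
    have hzb : z ∈ Metric.ball c (1/2 : ℝ) := by
      rw [Metric.mem_ball, hz]; exact hε2
    have hKz := hKslope z hzc
    simp only [hh_def, hg_def, smul_eq_mul, hKz]
    have h1 := hz2 z hzb
    have h2 := hcosh_ne z hzb hzc
    have h3 := sub_ne_zero.mpr hzc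
    field_simp
  calc (∮ z in C(c, ε), riemannZeta (1/2 - Complex.I * z) /
        ((1/2 - Complex.I * z + ω) * Complex.cosh ((π : ℝ) * z)))
      = ∮ z in C(c, ε), (z - c)⁻¹ • h z := circleIntegral.integral_congr hε0.le heq
    _ = (2 * (π : ℂ) * Complex.I) • h c := hint
    _ = 2 * (π : ℂ) * Complex.I *
        ((-1 : ℂ) ^ (n + 1) * riemannZeta n / ((π : ℂ) * Complex.I * ((n : ℂ) + ω))) := by
        rw [smul_eq_mul, hval]
end

section
/- For every complex ω with Re ω > -1/2, the function z ↦ ζ(1/2 - iz)/((1/2 - iz + ω)·cosh(πz)) has a double pole at z = i/2, and its residue there equals (1/(πi))·(γ(1+ω) - 1)/(1+ω)², where γ is the Euler–Mascheroni constant. -/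
open Real Complex Filter
open Metric Set

noncomputable section

/-- Analytic continuation of `ζ s - 1/(s-1)`. -/
def Zf : ℂ → ℂ :=
  Function.update (fun s => riemannZeta s - 1 / (s - 1)) 1 (Real.eulerMascheroniConstant : ℂ)

lemma Zf_of_ne {s : ℂ} (hs : s ≠ 1) : Zf s = riemannZeta s - 1 / (s - 1) :=
  Function.update_of_ne hs _ _

lemma Zf_one : Zf 1 = (Real.eulerMascheroniConstant : ℂ) := Function.update_self _ _ _

lemma Zf_analyticAt : AnalyticAt ℂ Zf 1 := by
  apply Complex.analyticAt_of_differentiable_on_punctured_nhds_of_continuousAt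
  · filter_upwards [self_mem_nhdsWithin] with s hs
    have hs' : s ≠ 1 := hs
    have heq : Zf =ᶠ[nhds s] fun t => riemannZeta t - 1 / (t - 1) := by
      filter_upwards [isOpen_compl_singleton.mem_nhds hs'] with t ht
      exact Zf_of_ne ht
    refine heq.differentiableAt_iff.mpr ?_
    exact (differentiableAt_riemannZeta hs').sub
      ((differentiableAt_const 1).div (differentiableAt_id.sub (differentiableAt_const 1))
        (sub_ne_zero.mpr hs'))
  · rw [← continuousWithinAt_compl_self]
    have h : Tendsto Zf (nhdsWithin 1 {1}ᶜ) (nhds (Real.eulerMascheroniConstant : ℂ)) := by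
      apply tendsto_riemannZeta_sub_one_div.congr'
      filter_upwards [self_mem_nhdsWithin] with s hs
      exact (Zf_of_ne hs).symm
    simpa [ContinuousWithinAt, Zf_one] using h

/-- `cosh (π z)/(z - i/2)`, made analytic. -/
def Ct : ℂ → ℂ := dslope (fun z => Complex.cosh ((Real.pi : ℂ) * z)) (Complex.I / 2)

lemma cosh_pi_half : Complex.cosh ((Real.pi : ℂ) * (Complex.I / 2)) = 0 := by
  rw [show (Real.pi : ℂ) * (Complex.I / 2) = ((Real.pi : ℂ) / 2) * Complex.I by ring,
    Complex.cosh_mul_I, Complex.cos_pi_div_two]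

lemma Ct_diffOn : DifferentiableOn ℂ Ct univ := by
  unfold Ct
  exact (Complex.differentiableOn_dslope univ_mem).mpr
    ((Complex.differentiable_cosh.comp
      ((differentiable_const _).mul differentiable_id))).differentiableOn

lemma Ct_diff (z : ℂ) : DifferentiableAt ℂ Ct z :=
  (Ct_diffOn z (mem_univ z)).differentiableAt univ_mem

lemma Ct_val : Ct (Complex.I / 2) = Complex.I * (Real.pi : ℂ) := by
  rw [Ct, dslope_same]
  have h : HasDerivAt (fun z => Complex.cosh ((Real.pi : ℂ) * z))
      (Complex.sinh ((Real.pi : ℂ) * (Complex.I / 2)) * (Real.pi : ℂ)) (Complex.I / 2) := by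
    simpa [Function.comp_def] using (Complex.hasDerivAt_cosh ((Real.pi : ℂ) * (Complex.I / 2))).comp (Complex.I / 2)
      ((hasDerivAt_id (Complex.I / 2)).const_mul (Real.pi : ℂ))
  rw [h.deriv, show (Real.pi : ℂ) * (Complex.I / 2) = ((Real.pi : ℂ) / 2) * Complex.I by ring,
    Complex.sinh_mul_I, Complex.sin_pi_div_two]
  ring

lemma cosh_factor (z : ℂ) :
    Complex.cosh ((Real.pi : ℂ) * z) = (z - Complex.I / 2) * Ct z := by
  rcases eq_or_ne z (Complex.I / 2) with rfl | hz
  · simp [cosh_pi_half]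
  · rw [Ct, dslope_of_ne _ hz, slope_def_field, cosh_pi_half, sub_zero,
      mul_div_cancel₀ _ (sub_ne_zero.mpr hz)]

lemma cosh_neg_symm (z : ℂ) :
    Complex.cosh ((Real.pi : ℂ) * (Complex.I - z)) = -Complex.cosh ((Real.pi : ℂ) * z) := by
  rw [mul_sub, Complex.cosh_sub, Complex.cosh_mul_I, Complex.cos_pi, Complex.sinh_mul_I,
    Complex.sin_pi]
  ring

lemma Ct_symm (z : ℂ) : Ct (Complex.I - z) = Ct z := by
  rcases eq_or_ne z (Complex.I / 2) with rfl | hz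
  · rw [show Complex.I - Complex.I / 2 = Complex.I / 2 by ring]
  · have hz' : Complex.I - z ≠ Complex.I / 2 := fun h => hz (by linear_combination -h)
    rw [Ct, dslope_of_ne _ hz', dslope_of_ne _ hz, slope_def_field, slope_def_field,
      cosh_pi_half, sub_zero, sub_zero, cosh_neg_symm]
    rw [show Complex.I - z - Complex.I / 2 = -(z - Complex.I / 2) by ring, neg_div_neg_eq]

lemma Ct_deriv : deriv Ct (Complex.I / 2) = 0 := by
  have h1 : (fun z => Ct (Complex.I - z)) = Ct := funext Ct_symm
  have h2 : deriv (fun z => Ct (Complex.I - z)) (Complex.I / 2)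
      = -deriv Ct (Complex.I - Complex.I / 2) :=
    deriv_comp_const_sub Ct Complex.I (Complex.I / 2)
  rw [h1, show Complex.I - Complex.I / 2 = Complex.I / 2 by ring] at h2
  linear_combination h2 / 2

lemma I_half_val : (1 / 2 : ℂ) - Complex.I * (Complex.I / 2) = 1 := by
  linear_combination (-(1/2) : ℂ) * Complex.I_mul_I

/-- numerator -/
def Nf (z : ℂ) : ℂ := (z - Complex.I / 2) * Zf (1/2 - Complex.I * z) + Complex.I

/-- denominator -/
def Df (ω z : ℂ) : ℂ := (1/2 - Complex.I * z + ω) * Ct z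

/-- the regularized function -/
def gf (ω z : ℂ) : ℂ := Nf z / Df ω z

lemma Nf_c : Nf (Complex.I / 2) = Complex.I := by simp [Nf]

lemma Df_c (ω : ℂ) : Df ω (Complex.I / 2) = (1 + ω) * (Complex.I * (Real.pi : ℂ)) := by
  rw [Df, Ct_val, show (1/2 : ℂ) - Complex.I * (Complex.I / 2) + ω = 1 + ω by
    linear_combination (-(1/2) : ℂ) * Complex.I_mul_I]

lemma key (ω : ℂ) (z : ℂ) (hz : z ≠ Complex.I / 2) :
    riemannZeta (1/2 - Complex.I * z)
        / ((1/2 - Complex.I * z + ω) * Complex.cosh ((Real.pi : ℂ) * z))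
      = gf ω z / (z - Complex.I / 2) ^ 2 := by
  have hw : z - Complex.I / 2 ≠ 0 := sub_ne_zero.mpr hz
  have hs1 : (1/2 : ℂ) - Complex.I * z ≠ 1 := by
    intro h
    apply hz
    linear_combination Complex.I * h + z * Complex.I_mul_I
  have hnum : Nf z = (z - Complex.I / 2) * riemannZeta (1/2 - Complex.I * z) := by
    rw [Nf, Zf_of_ne hs1,
      show (1/2 : ℂ) - Complex.I * z - 1 = -Complex.I * (z - Complex.I / 2) by
        linear_combination (-(1/2) : ℂ) * Complex.I_mul_I]
    have h3 : (z - Complex.I / 2) * (1 / (-Complex.I * (z - Complex.I / 2))) = Complex.I := by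
      rw [show -Complex.I * (z - Complex.I / 2) = (z - Complex.I / 2) * -Complex.I by ring,
        mul_one_div, div_eq_iff (mul_ne_zero hw (neg_ne_zero.mpr Complex.I_ne_zero))]
      linear_combination (z - Complex.I / 2) * Complex.I_mul_I
    rw [mul_sub, h3]
    ring
  rw [gf, hnum, Df, cosh_factor z, div_div,
    show (1/2 - Complex.I * z + ω) * Ct z * (z - Complex.I / 2) ^ 2
      = (z - Complex.I / 2) * ((1/2 - Complex.I * z + ω) * ((z - Complex.I / 2) * Ct z)) by ring,
    mul_div_mul_left _ _ hw]

lemma gf_analyticAt (ω : ℂ) (h1ω : (1 : ℂ) + ω ≠ 0) : AnalyticAt ℂ (gf ω) (Complex.I / 2) ∧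
    Df ω (Complex.I / 2) ≠ 0 := by
  have hπ : (Real.pi : ℂ) ≠ 0 := Complex.ofReal_ne_zero.mpr Real.pi_ne_zero
  have hDne : Df ω (Complex.I / 2) ≠ 0 := by
    rw [Df_c]
    exact mul_ne_zero h1ω (mul_ne_zero Complex.I_ne_zero hπ)
  refine ⟨?_, hDne⟩
  have hZcomp : AnalyticAt ℂ (fun z : ℂ => Zf (1/2 - Complex.I * z)) (Complex.I / 2) := by
    apply AnalyticAt.comp (x := Complex.I / 2)
    · rw [I_half_val]; exact Zf_analyticAt
    · exact analyticAt_const.sub (analyticAt_const.mul analyticAt_id)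
  have hCtan : AnalyticAt ℂ Ct (Complex.I / 2) := Ct_diffOn.analyticAt univ_mem
  have hNan : AnalyticAt ℂ Nf (Complex.I / 2) :=
    ((analyticAt_id.sub analyticAt_const).mul hZcomp).add analyticAt_const
  have hDan : AnalyticAt ℂ (Df ω) (Complex.I / 2) :=
    ((analyticAt_const.sub (analyticAt_const.mul analyticAt_id)).add analyticAt_const).mul hCtan
  exact hNan.div hDan hDne

lemma gf_deriv (ω : ℂ) (h1ω : (1 : ℂ) + ω ≠ 0) :
    deriv (gf ω) (Complex.I / 2) =
      (1 / ((Real.pi : ℂ) * Complex.I)) *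
        (((Real.eulerMascheroniConstant : ℂ) * (1 + ω) - 1) / (1 + ω) ^ 2) := by
  have hπ : (Real.pi : ℂ) ≠ 0 := Complex.ofReal_ne_zero.mpr Real.pi_ne_zero
  have hDne : Df ω (Complex.I / 2) ≠ 0 := (gf_analyticAt ω h1ω).2
  have hZcomp : AnalyticAt ℂ (fun z : ℂ => Zf (1/2 - Complex.I * z)) (Complex.I / 2) := by
    apply AnalyticAt.comp (x := Complex.I / 2)
    · rw [I_half_val]; exact Zf_analyticAt
    · exact analyticAt_const.sub (analyticAt_const.mul analyticAt_id)
  have hZd : HasDerivAt (fun z : ℂ => Zf (1/2 - Complex.I * z))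
      (deriv (fun z : ℂ => Zf (1/2 - Complex.I * z)) (Complex.I / 2)) (Complex.I / 2) :=
    hZcomp.differentiableAt.hasDerivAt
  have hNd : HasDerivAt Nf (Real.eulerMascheroniConstant : ℂ) (Complex.I / 2) := by
    have h := (((hasDerivAt_id (Complex.I / 2)).sub_const (Complex.I / 2)).mul hZd).add_const
      Complex.I
    simp only [id_eq] at h
    rw [show (1 : ℂ) * Zf (1/2 - Complex.I * (Complex.I / 2)) + (Complex.I / 2 - Complex.I / 2) *
        deriv (fun z : ℂ => Zf (1/2 - Complex.I * z)) (Complex.I / 2)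
        = (Real.eulerMascheroniConstant : ℂ) by rw [I_half_val, Zf_one]; ring] at h
    exact h
  have hed : HasDerivAt (fun z : ℂ => 1/2 - Complex.I * z + ω) (-Complex.I) (Complex.I / 2) := by
    have h := (((hasDerivAt_id (Complex.I / 2)).const_mul Complex.I).const_sub (1/2 : ℂ)).add_const ω
    simpa using h
  have hCtd : HasDerivAt Ct 0 (Complex.I / 2) := by
    have h := (Ct_diff (Complex.I / 2)).hasDerivAt
    rwa [Ct_deriv] at h
  have hDd : HasDerivAt (Df ω) (Real.pi : ℂ) (Complex.I / 2) := by
    have h := hed.mul hCtd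
    rw [show -Complex.I * Ct (Complex.I / 2) + (1/2 - Complex.I * (Complex.I / 2) + ω) * 0
        = (Real.pi : ℂ) by rw [Ct_val]; linear_combination (-(Real.pi : ℂ)) * Complex.I_mul_I] at h
    exact h
  have hgd : HasDerivAt (gf ω)
      (((Real.eulerMascheroniConstant : ℂ) * Df ω (Complex.I / 2)
          - Nf (Complex.I / 2) * (Real.pi : ℂ)) / (Df ω (Complex.I / 2)) ^ 2)
      (Complex.I / 2) := hNd.div hDd hDne
  rw [hgd.deriv, Nf_c, Df_c]
  field_simp

theorem double_pole_residue (ω : ℂ) (hω : -(1/2) < ω.re) :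
    (∃ c : ℂ, c ≠ 0 ∧
      Tendsto (fun z : ℂ => (z - Complex.I / 2) ^ 2 *
          (riemannZeta (1/2 - Complex.I * z) /
            ((1/2 - Complex.I * z + ω) * Complex.cosh (π * z))))
        (nhdsWithin (Complex.I / 2) {Complex.I / 2}ᶜ) (nhds c)) ∧
    HasResidueAt
      (fun z : ℂ => riemannZeta (1/2 - Complex.I * z) /
        ((1/2 - Complex.I * z + ω) * Complex.cosh (π * z)))
      (Complex.I / 2)
      ((1 / (π * Complex.I)) *
        (((Real.eulerMascheroniConstant : ℂ) * (1 + ω) - 1) / (1 + ω) ^ 2)) := by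
  have hπ : (Real.pi : ℂ) ≠ 0 := Complex.ofReal_ne_zero.mpr Real.pi_ne_zero
  have h1ω : (1 : ℂ) + ω ≠ 0 := by
    intro h
    have := congrArg Complex.re h
    simp [Complex.add_re] at this
    linarith
  obtain ⟨hgan, hDne⟩ := gf_analyticAt ω h1ω
  constructor
  · -- double pole limit
    refine ⟨gf ω (Complex.I / 2), ?_, ?_⟩
    · rw [gf, Nf_c]
      exact div_ne_zero Complex.I_ne_zero hDne
    · have hcont : Tendsto (gf ω) (nhdsWithin (Complex.I / 2) {Complex.I / 2}ᶜ)
          (nhds (gf ω (Complex.I / 2))) :=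
        (hgan.continuousAt.continuousWithinAt :
          ContinuousWithinAt (gf ω) {Complex.I / 2}ᶜ (Complex.I / 2))
      apply hcont.congr'
      filter_upwards [self_mem_nhdsWithin] with z hz
      have hz' : z ≠ Complex.I / 2 := hz
      rw [key ω z hz', mul_comm, div_mul_cancel₀ _ (pow_ne_zero 2 (sub_ne_zero.mpr hz'))]
  · -- residue
    unfold HasResidueAt
    obtain ⟨δ, hδpos, hδ⟩ := Metric.eventually_nhds_iff.mp hgan.eventually_analyticAt
    have hgdiff : DifferentiableOn ℂ (gf ω) (ball (Complex.I / 2) δ) := fun z hz =>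
      ((hδ (mem_ball.mp hz)).differentiableAt).differentiableWithinAt
    filter_upwards [Ioo_mem_nhdsGT_of_mem (Set.left_mem_Ico.mpr hδpos)] with ε hε
    obtain ⟨hε0, hεδ⟩ := hε
    have main := Complex.two_pi_I_inv_smul_circleIntegral_sub_sq_inv_smul_of_differentiable
      isOpen_ball (closedBall_subset_ball hεδ) hgdiff (mem_ball_self hε0)
    have hcongr : (∮ z in C(Complex.I / 2, ε), riemannZeta (1/2 - Complex.I * z) /
        ((1/2 - Complex.I * z + ω) * Complex.cosh ((Real.pi : ℂ) * z)))
        = ∮ z in C(Complex.I / 2, ε), ((z - Complex.I / 2) ^ 2)⁻¹ • gf ω z := by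
      apply circleIntegral.integral_congr hε0.le
      intro z hz
      have hzne : z ≠ Complex.I / 2 := by
        intro h
        rw [h] at hz
        simp [mem_sphere, dist_self] at hz
        exact hε0.ne hz
      show riemannZeta (1/2 - Complex.I * z) /
          ((1/2 - Complex.I * z + ω) * Complex.cosh ((Real.pi : ℂ) * z))
          = ((z - Complex.I / 2) ^ 2)⁻¹ • gf ω z
      rw [key ω z hzne, smul_eq_mul, div_eq_inv_mul]
    rw [hcongr]
    have h2πI : (2 * (Real.pi : ℂ) * Complex.I) ≠ 0 :=
      mul_ne_zero (mul_ne_zero two_ne_zero hπ) Complex.I_ne_zero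
    rw [inv_smul_eq_iff₀ h2πI] at main
    rw [main, smul_eq_mul, gf_deriv ω h1ω]
end
end
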